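/- Let Φ ∈ ℝ^{m×n} have unit-norm columns with μ(Φ) ≤ 1/f, let x be supported on S with |S| = s, b₀ = Φx, and let v be a noise vector with ‖v‖ ≤ ε. For i, j ∉ S, i ≠ j, the orthogonal projection of b = b₀ + v onto span{φᵢ, φⱼ} satisfies ‖Proj(b)‖ ≤ (2f+2)/(f²−1)·Σ_{k∈S}|x_k| + (2f(f+1)/(f²−1))·ε. -/

import Mathlib

open RealInnerProductSpace

set_option maxHeartbeats 1000000 in
theorem stmt_15 {m n : ℕ} (φ : Fin n → EuclideanSpace ℝ (Fin m))
    (hnorm : ∀ i, ‖φ i‖ = 1) (f : ℝ) (hf : 1 < f)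
    (hcoh : ∀ i j, i ≠ j → |⟪φ i, φ j⟫| ≤ 1 / f)
    (S : Finset (Fin n)) (x : Fin n → ℝ) (hsupp : ∀ k, k ∉ S → x k = 0)
    (b₀ : EuclideanSpace ℝ (Fin m)) (hb₀ : b₀ = ∑ k ∈ S, x k • φ k)
    (v : EuclideanSpace ℝ (Fin m)) (ε : ℝ) (hv : ‖v‖ ≤ ε)
    (b : EuclideanSpace ℝ (Fin m)) (hb : b = b₀ + v)
    (i j : Fin n) (hi : i ∉ S) (hj : j ∉ S) (hij : i ≠ j) :
    ‖(Submodule.orthogonalProjectionOnto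
        (Submodule.span ℝ ({φ i, φ j} : Set (EuclideanSpace ℝ (Fin m)))) b :
        EuclideanSpace ℝ (Fin m))‖
      ≤ (2 * f + 2) / (f ^ 2 - 1) * (∑ k ∈ S, |x k|)
        + (2 * f * (f + 1) / (f ^ 2 - 1)) * ε := by
  have hf0 : (0:ℝ) < f := lt_trans one_pos hf
  set K := Submodule.span ℝ ({φ i, φ j} : Set (EuclideanSpace ℝ (Fin m))) with hK
  set P : EuclideanSpace ℝ (Fin m) := (Submodule.orthogonalProjectionOnto K b : EuclideanSpace ℝ (Fin m)) with hP
  have hPK : P ∈ K := SetLike.coe_mem _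
  obtain ⟨a, c, hac⟩ := Submodule.mem_span_pair.mp hPK
  have hiK : φ i ∈ K := Submodule.subset_span (by left; rfl)
  have hjK : φ j ∈ K := Submodule.subset_span (by right; rfl)
  have hperp : ∀ w ∈ K, ⟪b, w⟫ = ⟪P, w⟫ := by
    intro w hw
    have h0 : ⟪b - P, w⟫ = 0 := Submodule.starProjection_inner_eq_zero (K := K) b w hw
    rw [inner_sub_left] at h0
    linarith
  have hS0 : (0:ℝ) ≤ ∑ k ∈ S, |x k| := Finset.sum_nonneg (fun k _ => abs_nonneg _)
  have hε0 : (0:ℝ) ≤ ε := le_trans (norm_nonneg v) hv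
  set Sx : ℝ := ∑ k ∈ S, |x k| with hSx
  set B : ℝ := (1/f) * Sx + ε with hB
  have hB0 : 0 ≤ B := by positivity
  have hBt : ∀ t, t ∉ S → |⟪b, φ t⟫| ≤ B := by
    intro t ht
    rw [hb, hb₀, inner_add_left, sum_inner]
    have h1 : |∑ k ∈ S, ⟪x k • φ k, φ t⟫| ≤ (1/f) * Sx := by
      calc |∑ k ∈ S, ⟪x k • φ k, φ t⟫| ≤ ∑ k ∈ S, |⟪x k • φ k, φ t⟫| :=
            Finset.abs_sum_le_sum_abs _ _
        _ ≤ ∑ k ∈ S, |x k| * (1/f) := by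
            apply Finset.sum_le_sum
            intro k hk
            rw [real_inner_smul_left, abs_mul]
            have hkt : k ≠ t := fun h => ht (h ▸ hk)
            exact mul_le_mul_of_nonneg_left (hcoh k t hkt) (abs_nonneg _)
        _ = (1/f) * Sx := by rw [hSx, ← Finset.sum_mul]; ring
    have h2 : |⟪v, φ t⟫| ≤ ε := by
      calc |⟪v, φ t⟫| ≤ ‖v‖ * ‖φ t‖ := abs_real_inner_le_norm _ _
        _ = ‖v‖ := by rw [hnorm, mul_one]
        _ ≤ ε := hv
    calc |∑ k ∈ S, ⟪x k • φ k, φ t⟫ + ⟪v, φ t⟫|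
        ≤ |∑ k ∈ S, ⟪x k • φ k, φ t⟫| + |⟪v, φ t⟫| := abs_add_le _ _
      _ ≤ B := by rw [hB]; linarith
  set g : ℝ := ⟪φ i, φ j⟫ with hg'
  have hg : |g| ≤ 1/f := hcoh i j hij
  have hii : ⟪φ i, φ i⟫ = 1 := by
    rw [real_inner_self_eq_norm_sq, hnorm]; norm_num
  have hjj : ⟪φ j, φ j⟫ = 1 := by
    rw [real_inner_self_eq_norm_sq, hnorm]; norm_num
  have hgji : ⟪φ j, φ i⟫ = g := real_inner_comm _ _
  have eqi : a + c * g = ⟪b, φ i⟫ := by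
    rw [hperp (φ i) hiK, ← hac, inner_add_left, real_inner_smul_left,
      real_inner_smul_left, hii, hgji]
    ring
  have eqj : a * g + c = ⟪b, φ j⟫ := by
    rw [hperp (φ j) hjK, ← hac, inner_add_left, real_inner_smul_left,
      real_inner_smul_left, hjj]
    ring
  obtain ⟨Bi, hBi'⟩ : ∃ r : ℝ, ⟪b, φ i⟫ = r := ⟨_, rfl⟩
  obtain ⟨Bj, hBj'⟩ : ∃ r : ℝ, ⟪b, φ j⟫ = r := ⟨_, rfl⟩
  rw [hBi'] at eqi
  rw [hBj'] at eqj
  have hBi : |Bi| ≤ B := hBi' ▸ hBt i hi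
  have hBj : |Bj| ≤ B := hBj' ▸ hBt j hj
  have hg2 : g^2 ≤ 1/f^2 := by
    have h1 : |g| * |g| ≤ (1/f) * (1/f) := mul_le_mul hg hg (abs_nonneg g) (by positivity)
    calc g^2 = |g| * |g| := by rw [abs_mul_abs_self]; ring
      _ ≤ (1/f) * (1/f) := h1
      _ = 1/f^2 := by ring
  have hf2 : 0 < 1 - 1/f^2 := by
    rw [sub_pos, div_lt_one (by positivity)]
    nlinarith
  -- solve for a and c
  have hg2' : (0:ℝ) < 1 - g^2 := by
    have h1 : (1:ℝ)/f^2 < 1 := by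
      rw [div_lt_one (by positivity)]
      nlinarith
    linarith
  have key : ∀ u w Bu Bw : ℝ, |Bu| ≤ B → |Bw| ≤ B → u + w * g = Bu → w + u * g = Bw →
      |u| * (1 - 1/f^2) ≤ B * (1 + 1/f) := by
    intro u w Bu Bw hBu hBw h1 h2
    have hsolve : u * (1 - g^2) = Bu - g * Bw := by
      linear_combination h1 - g * h2
    have habs : |u| * (1 - g^2) ≤ B * (1 + 1/f) := by
      have h3 : |u| * (1 - g^2) = |u * (1 - g^2)| := by
        rw [abs_mul, abs_of_pos hg2']
      rw [h3, hsolve]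
      calc |Bu - g * Bw| ≤ |Bu| + |g| * |Bw| := by
            rw [← abs_mul]; exact abs_sub _ _
        _ ≤ B + (1/f) * B :=
            add_le_add hBu (mul_le_mul hg hBw (abs_nonneg _) (by positivity))
        _ = B * (1 + 1/f) := by ring
    have : |u| * (1 - 1/f^2) ≤ |u| * (1 - g^2) :=
      mul_le_mul_of_nonneg_left (by linarith) (abs_nonneg _)
    linarith
  have ha : |a| * (1 - 1/f^2) ≤ B * (1 + 1/f) :=
    key a c Bi Bj hBi hBj eqi (by linarith [eqj])
  have hc : |c| * (1 - 1/f^2) ≤ B * (1 + 1/f) :=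
    key c a Bj Bi hBj hBi (by linarith [eqj]) (by linarith [eqi])
  have hnP : ‖P‖ ≤ |a| + |c| := by
    calc ‖P‖ = ‖a • φ i + c • φ j‖ := by rw [hac]
      _ ≤ ‖a • φ i‖ + ‖c • φ j‖ := norm_add_le _ _
      _ = |a| + |c| := by rw [norm_smul, norm_smul, hnorm, hnorm]; simp [Real.norm_eq_abs]
  have hmain : ‖P‖ * (1 - 1/f^2) ≤ 2 * B * (1 + 1/f) := by
    have := mul_le_mul_of_nonneg_right hnP (le_of_lt hf2)
    nlinarith
  have hf1 : f - 1 ≠ 0 := by linarith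
  have hfp1 : f + 1 ≠ 0 := by linarith
  have hfne : f ≠ 0 := ne_of_gt hf0
  have hreq : ((2 * f + 2) / (f ^ 2 - 1) * Sx + (2 * f * (f + 1) / (f ^ 2 - 1)) * ε)
      * (1 - 1/f^2) = 2 * B * (1 + 1/f) := by
    have hf21 : f^2 - 1 ≠ 0 := by
      intro h
      have : (f-1)*(f+1) = 0 := by ring_nf; linarith [h]
      rcases mul_eq_zero.mp this with h1 | h1
      · exact hf1 h1
      · exact hfp1 h1
    rw [hB]
    field_simp
  have h2 : ‖P‖ * (1 - 1/f^2) ≤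
      ((2 * f + 2) / (f ^ 2 - 1) * Sx + (2 * f * (f + 1) / (f ^ 2 - 1)) * ε)
        * (1 - 1/f^2) := by
    rw [hreq]; exact hmain
  exact le_of_mul_le_mul_right h2 hf2
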